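/- Dual of d(p): let p, q > 1 with 1/p + 1/q = 1 and (a_n) positive with partial sums A_n. Then the Banach dual of d(p) (under the pairing ⟨x,u⟩ = ∑ x_n u_n) equals the set of coordinatewise products ℓ^q · g(p): every x of the form x = y·z with y ∈ ℓ^q, z ∈ g(p) defines a bounded functional on d(p) with norm at most ‖y‖_q ‖z‖_{g(p)}, and conversely every x ∈ (d(p))^* factors as x = y·z with ‖y‖_q ‖z‖_{g(p)} ≤ ‖x‖_{(d(p))^*}. -/

import Mathlib

open scoped ENNReal NNReal

noncomputable def dNorm (a : ℕ → ℝ) (p : ℝ) (y : ℕ → ℂ) : ℝ≥0∞ :=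
  (∑' n : ℕ, ENNReal.ofReal (a n) *
      (⨆ k : ℕ, ⨆ _ : n ≤ k, (‖y k‖₊ : ℝ≥0∞) ^ p)) ^ (1 / p)

noncomputable def gNorm (a : ℕ → ℝ) (p : ℝ) (z : ℕ → ℂ) : ℝ≥0∞ :=
  ⨆ n : ℕ, ((∑ j ∈ Finset.range (n + 1), ENNReal.ofReal (a j))⁻¹ *
      ∑ k ∈ Finset.range (n + 1), (‖z k‖₊ : ℝ≥0∞) ^ p) ^ (1 / p)

noncomputable def lpNorm (p : ℝ) (x : ℕ → ℂ) : ℝ≥0∞ :=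
  (∑' n : ℕ, (‖x n‖₊ : ℝ≥0∞) ^ p) ^ (1 / p)

/-- The dual norm of `d(p)` at `x`, computed via the pairing `⟨x,u⟩ = ∑ x_n u_n`. -/
noncomputable def dDualNorm (a : ℕ → ℝ) (p : ℝ) (x : ℕ → ℂ) : ℝ≥0∞ :=
  ⨆ (u : ℕ → ℂ) (_ : dNorm a p u ≤ 1), ∑' n : ℕ, (‖x n‖₊ : ℝ≥0∞) * (‖u n‖₊ : ℝ≥0∞)

open Finset

/-- Abel-type majorization: if prefix sums of `c` are dominated by `G` times prefix
sums of `aw`, then for any decreasing `s`, `∑ c s ≤ G ∑ aw s` (finite version). -/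
lemma abel_maj (G : ℝ≥0∞) (c aw : ℕ → ℝ≥0∞)
    (hc : ∀ N, ∑ k ∈ range (N+1), c k ≤ G * ∑ k ∈ range (N+1), aw k) :
    ∀ N (s : ℕ → ℝ≥0∞), (∀ n, s (n+1) ≤ s n) →
      ∑ n ∈ range N, c n * s n ≤ G * ∑ n ∈ range N, aw n * s n := by
  intro N
  induction N with
  | zero => simp
  | succ N ih =>
    intro s hs
    have hanti : Antitone s := antitone_nat_of_succ_le hs
    set s' : ℕ → ℝ≥0∞ := fun n => s n - s N with hs'def
    have hs'dec : ∀ n, s' (n+1) ≤ s' n := fun n => tsub_le_tsub_right (hs n) _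
    have hrec : ∀ n ∈ range (N+1), s n = s' n + s N := by
      intro n hn
      have : s N ≤ s n := hanti (Nat.lt_succ_iff.mp (mem_range.mp hn))
      simp only [hs'def]
      exact (tsub_add_cancel_of_le this).symm
    have hS'N : s' N = 0 := by simp [hs'def]
    calc ∑ n ∈ range (N+1), c n * s n
        = ∑ n ∈ range (N+1), (c n * s' n + c n * s N) := by
          refine sum_congr rfl fun n hn => ?_
          rw [hrec n hn, mul_add]
      _ = ∑ n ∈ range (N+1), c n * s' n + (∑ n ∈ range (N+1), c n) * s N := by
          rw [sum_add_distrib, sum_mul]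
      _ = ∑ n ∈ range N, c n * s' n + (∑ n ∈ range (N+1), c n) * s N := by
          have hextc : ∑ n ∈ range (N+1), c n * s' n = ∑ n ∈ range N, c n * s' n := by
            rw [Finset.sum_range_succ, hS'N, mul_zero, add_zero]
          rw [hextc]
      _ ≤ G * ∑ n ∈ range N, aw n * s' n + (G * ∑ n ∈ range (N+1), aw n) * s N :=
          add_le_add (ih s' hs'dec) (mul_le_mul_left (hc N) _)
      _ = G * (∑ n ∈ range N, aw n * s' n + (∑ n ∈ range (N+1), aw n) * s N) := by
          rw [mul_add, mul_assoc]
      _ = G * (∑ n ∈ range (N+1), aw n * s' n + (∑ n ∈ range (N+1), aw n) * s N) := by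
          have hexta : ∑ n ∈ range (N+1), aw n * s' n = ∑ n ∈ range N, aw n * s' n := by
            rw [Finset.sum_range_succ, hS'N, mul_zero, add_zero]
          rw [hexta]
      _ = G * ∑ n ∈ range (N+1), aw n * s n := by
          congr 1
          rw [sum_mul, ← sum_add_distrib]
          refine sum_congr rfl fun n hn => ?_
          rw [← mul_add, ← hrec n hn]

lemma abel_maj_tsum (G : ℝ≥0∞) (c aw : ℕ → ℝ≥0∞)
    (hc : ∀ N, ∑ k ∈ range (N+1), c k ≤ G * ∑ k ∈ range (N+1), aw k)
    (s : ℕ → ℝ≥0∞) (hs : ∀ n, s (n+1) ≤ s n) :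
    ∑' n, c n * s n ≤ G * ∑' n, aw n * s n := by
  rw [ENNReal.tsum_eq_iSup_nat]
  refine iSup_le fun N => ?_
  calc ∑ n ∈ range N, c n * s n ≤ G * ∑ n ∈ range N, aw n * s n :=
        abel_maj G c aw hc N s hs
    _ ≤ G * ∑' n, aw n * s n := by
        exact mul_le_mul_right (ENNReal.sum_le_tsum _) G

lemma part1 (p q : ℝ) (hp : 1 < p) (hq : 1 / p + 1 / q = 1)
    (a : ℕ → ℝ) (ha : ∀ n, 0 < a n) (y z u : ℕ → ℂ) :
    (∑' n : ℕ, (‖y n * z n‖₊ : ℝ≥0∞) * (‖u n‖₊ : ℝ≥0∞)) ≤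
      lpNorm q y * gNorm a p z * dNorm a p u := by
  have hp0 : (0:ℝ) < p := lt_trans one_pos hp
  have hq0 : (0:ℝ) < q := by
    have h1 : (0:ℝ) < 1/q := by
      have : 1/p < 1 := by rw [div_lt_one hp0]; exact hp
      linarith
    exact (one_div_pos).mp h1
  have hq1 : 1 < q := by
    have h1 : 1/q < 1 := by
      have : (0:ℝ) < 1/p := by positivity
      linarith
    rw [div_lt_one hq0] at h1; exact h1
  set aw : ℕ → ℝ≥0∞ := fun n => ENNReal.ofReal (a n) with haw
  set s : ℕ → ℝ≥0∞ := fun n => ⨆ k, ⨆ _ : n ≤ k, (‖u k‖₊ : ℝ≥0∞) ^ p with hsdef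
  have hsdec : ∀ n, s (n+1) ≤ s n := by
    intro n
    exact iSup₂_le fun k hk => le_iSup₂ (f := fun k (_ : n ≤ k) => (‖u k‖₊ : ℝ≥0∞) ^ p) k
      (le_trans (Nat.le_succ n) hk)
  set G : ℝ≥0∞ := gNorm a p z with hG
  set D : ℝ≥0∞ := dNorm a p u with hD
  -- prefix bound for c n = ‖z n‖^p
  have hAfin : ∀ N, (∑ j ∈ range (N+1), aw j) ≠ ∞ := by
    intro N
    exact (lt_of_le_of_lt (Finset.sum_le_sum fun i _ => le_refl _)
      (lt_of_le_of_lt (le_refl _) (ENNReal.sum_lt_top.mpr fun i _ => ENNReal.ofReal_lt_top))).ne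
  have hApos : ∀ N, (∑ j ∈ range (N+1), aw j) ≠ 0 := by
    intro N
    intro h
    have h0 : aw 0 = 0 := by
      have := Finset.sum_eq_zero_iff.mp h 0 (by simp)
      exact this
    rw [haw] at h0
    simp only [ENNReal.ofReal_eq_zero] at h0
    exact absurd h0 (not_le.mpr (ha 0))
  have hc : ∀ N, ∑ k ∈ range (N+1), (‖z k‖₊ : ℝ≥0∞) ^ p ≤
      G ^ p * ∑ k ∈ range (N+1), aw k := by
    intro N
    have h1 : ((∑ j ∈ range (N+1), aw j)⁻¹ * ∑ k ∈ range (N+1), (‖z k‖₊ : ℝ≥0∞) ^ p) ^ (1/p)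
        ≤ G := by
      rw [hG, gNorm]
      exact le_iSup (fun n => ((∑ j ∈ Finset.range (n + 1), ENNReal.ofReal (a j))⁻¹ *
        ∑ k ∈ Finset.range (n + 1), (‖z k‖₊ : ℝ≥0∞) ^ p) ^ (1 / p)) N
    have h2 : (∑ j ∈ range (N+1), aw j)⁻¹ * ∑ k ∈ range (N+1), (‖z k‖₊ : ℝ≥0∞) ^ p ≤ G ^ p := by
      have := ENNReal.rpow_le_rpow h1 (le_of_lt hp0)
      rwa [← ENNReal.rpow_mul, one_div_mul_cancel (ne_of_gt hp0), ENNReal.rpow_one] at this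
    calc ∑ k ∈ range (N+1), (‖z k‖₊ : ℝ≥0∞) ^ p
        = (∑ j ∈ range (N+1), aw j) *
          ((∑ j ∈ range (N+1), aw j)⁻¹ * ∑ k ∈ range (N+1), (‖z k‖₊ : ℝ≥0∞) ^ p) := by
          rw [← mul_assoc, ENNReal.mul_inv_cancel (hApos N) (hAfin N), one_mul]
      _ ≤ (∑ j ∈ range (N+1), aw j) * G ^ p := mul_le_mul_right h2 _
      _ = G ^ p * ∑ j ∈ range (N+1), aw j := mul_comm _ _
  -- key: ∑ ‖z u‖^p ≤ G^p D^p
  have hkey : ∑' n, (‖z n * u n‖₊ : ℝ≥0∞) ^ p ≤ G ^ p * D ^ p := by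
    have h1 : ∀ n, (‖z n * u n‖₊ : ℝ≥0∞) ^ p ≤ (‖z n‖₊ : ℝ≥0∞) ^ p * s n := by
      intro n
      have : (‖z n * u n‖₊ : ℝ≥0∞) ^ p = (‖z n‖₊ : ℝ≥0∞) ^ p * (‖u n‖₊ : ℝ≥0∞) ^ p := by
        rw [nnnorm_mul, ENNReal.coe_mul, ENNReal.mul_rpow_of_nonneg _ _ (le_of_lt hp0)]
      rw [this]
      exact mul_le_mul_right (le_iSup₂ (f := fun k (_ : n ≤ k) => (‖u k‖₊ : ℝ≥0∞) ^ p) n le_rfl) _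
    calc ∑' n, (‖z n * u n‖₊ : ℝ≥0∞) ^ p ≤ ∑' n, (‖z n‖₊ : ℝ≥0∞) ^ p * s n :=
          ENNReal.tsum_le_tsum h1
      _ ≤ G ^ p * ∑' n, aw n * s n := abel_maj_tsum _ _ _ hc s hsdec
      _ = G ^ p * D ^ p := by
          congr 1
          rw [hD, dNorm, ← ENNReal.rpow_mul, one_div_mul_cancel (ne_of_gt hp0), ENNReal.rpow_one]
  -- Hölder
  have hconj : Real.HolderConjugate q p := by
    rw [Real.holderConjugate_iff]
    constructor
    · exact hq1
    · rw [← one_div, ← one_div]; linarith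
  have hhold : (∑' n, (‖y n‖₊ : ℝ≥0∞) * (‖z n * u n‖₊ : ℝ≥0∞)) ≤
      lpNorm q y * (∑' n, (‖z n * u n‖₊ : ℝ≥0∞) ^ p) ^ (1/p) := by
    have := ENNReal.lintegral_mul_le_Lp_mul_Lq (MeasureTheory.Measure.count (α := ℕ)) hconj
      (f := fun n => (‖y n‖₊ : ℝ≥0∞)) (g := fun n => (‖z n * u n‖₊ : ℝ≥0∞))
      (Measurable.aemeasurable (by measurability)) (Measurable.aemeasurable (by measurability))
    simp only [Pi.mul_apply] at this
    rw [MeasureTheory.lintegral_count, MeasureTheory.lintegral_count,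
      MeasureTheory.lintegral_count] at this
    rw [lpNorm]
    exact this
  calc ∑' n, (‖y n * z n‖₊ : ℝ≥0∞) * (‖u n‖₊ : ℝ≥0∞)
      = ∑' n, (‖y n‖₊ : ℝ≥0∞) * (‖z n * u n‖₊ : ℝ≥0∞) := by
        congr 1; funext n
        rw [nnnorm_mul, nnnorm_mul, ENNReal.coe_mul, ENNReal.coe_mul, mul_assoc]
    _ ≤ lpNorm q y * (∑' n, (‖z n * u n‖₊ : ℝ≥0∞) ^ p) ^ (1/p) := hhold
    _ ≤ lpNorm q y * (G ^ p * D ^ p) ^ (1/p) :=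
        mul_le_mul_right (ENNReal.rpow_le_rpow hkey (by positivity)) _
    _ = lpNorm q y * (G * D) := by
        congr 1
        rw [ENNReal.mul_rpow_of_nonneg _ _ (by positivity : (0:ℝ) ≤ 1/p),
          ← ENNReal.rpow_mul, ← ENNReal.rpow_mul,
          mul_one_div_cancel (ne_of_gt hp0), ENNReal.rpow_one, ENNReal.rpow_one]
    _ = lpNorm q y * G * D := by rw [mul_assoc]

noncomputable def sAW (a : ℕ → ℝ) (n : ℕ) : ℝ≥0∞ := ENNReal.ofReal (a n)
noncomputable def sAA (a : ℕ → ℝ) (n : ℕ) : ℝ≥0∞ := ∑ k ∈ range n, sAW a k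
noncomputable def sDA (a : ℕ → ℝ) (m j : ℕ) : ℝ≥0∞ := ∑ k ∈ Finset.Ico m j, sAW a k
noncomputable def sXX (x : ℕ → ℂ) (n : ℕ) : ℝ≥0∞ := ∑ k ∈ range n, (‖x k‖₊ : ℝ≥0∞)
noncomputable def sDX (x : ℕ → ℂ) (m j : ℕ) : ℝ≥0∞ := ∑ k ∈ Finset.Ico m j, (‖x k‖₊ : ℝ≥0∞)
noncomputable def sQ (a : ℕ → ℝ) (x : ℕ → ℂ) (m j : ℕ) : ℝ≥0∞ :=
  sDX x m (j+1) / sDA a m (j+1)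
noncomputable def sSig (a : ℕ → ℝ) (x : ℕ → ℂ) (m : ℕ) : ℝ≥0∞ :=
  ⨆ j, ⨆ _ : m ≤ j, sQ a x m j

open Classical in
noncomputable def sStart (a : ℕ → ℝ) (x : ℕ → ℂ) : ℕ → ℕ
  | 0 => 0
  | n+1 => if sQ a x (sStart a x n) n = sSig a x (sStart a x n) then n+1 else sStart a x n

noncomputable def sEll (a : ℕ → ℝ) (x : ℕ → ℂ) (n : ℕ) : ℝ≥0∞ := sSig a x (sStart a x n)

section basics
variable {a : ℕ → ℝ} {x : ℕ → ℂ}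

lemma sAW_pos (ha : ∀ n, 0 < a n) (n : ℕ) : 0 < sAW a n := by
  simp [sAW, ENNReal.ofReal_pos, ha n]

lemma sAW_ne_top (n : ℕ) : sAW a n ≠ ∞ := ENNReal.ofReal_ne_top

lemma sDA_ne_top (m j : ℕ) : sDA a m j ≠ ∞ :=
  (ENNReal.sum_lt_top.mpr fun i _ => (sAW_ne_top i).lt_top).ne

lemma sAA_ne_top (n : ℕ) : sAA a n ≠ ∞ :=
  (ENNReal.sum_lt_top.mpr fun i _ => (sAW_ne_top i).lt_top).ne

lemma sDA_pos (ha : ∀ n, 0 < a n) {m j : ℕ} (h : m ≤ j) : 0 < sDA a m (j+1) := by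
  refine lt_of_lt_of_le (sAW_pos ha m) ?_
  rw [sDA]
  exact Finset.single_le_sum (f := fun k => sAW a k) (fun i _ => zero_le)
    (Finset.mem_Ico.mpr ⟨le_refl m, Nat.lt_succ_of_le h⟩)

lemma sDA_add {m k l : ℕ} (h1 : m ≤ k) (h2 : k ≤ l) :
    sDA a m k + sDA a k l = sDA a m l := Finset.sum_Ico_consecutive _ h1 h2

lemma sDX_add {m k l : ℕ} (h1 : m ≤ k) (h2 : k ≤ l) :
    sDX x m k + sDX x k l = sDX x m l := Finset.sum_Ico_consecutive _ h1 h2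

lemma sAA_eq_sDA (n : ℕ) : sAA a n = sDA a 0 n := by
  rw [sAA, sDA, Finset.range_eq_Ico]

lemma sXX_eq_sDX (n : ℕ) : sXX x n = sDX x 0 n := by
  rw [sXX, sDX, Finset.range_eq_Ico]

lemma sDX_le_sXX (m j : ℕ) : sDX x m j ≤ sXX x j := by
  rw [sXX_eq_sDX]
  exact Finset.sum_le_sum_of_subset (Finset.Ico_subset_Ico (Nat.zero_le m) le_rfl)

lemma sQ_le_sSig {m j : ℕ} (h : m ≤ j) : sQ a x m j ≤ sSig a x m :=
  le_iSup₂ (f := fun j (_ : m ≤ j) => sQ a x m j) j h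

lemma sDX_le_of_le_sSig {m j : ℕ} (ha' : ∀ n, 0 < a n) (h : m ≤ j) :
    sDX x m (j+1) ≤ sSig a x m * sDA a m (j+1) := by
  have := sQ_le_sSig (a := a) (x := x) h
  rw [sQ, ENNReal.div_le_iff (sDA_pos ha' h).ne' (sDA_ne_top _ _)] at this
  exact this

lemma sDX_eq_of_attained {m j : ℕ} (ha' : ∀ n, 0 < a n) (h : m ≤ j)
    (heq : sQ a x m j = sSig a x m) :
    sDX x m (j+1) = sSig a x m * sDA a m (j+1) := by
  have h0 := (sDA_pos (a := a) ha' h).ne'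
  have ht := sDA_ne_top (a := a) m (j+1)
  rw [sQ] at heq
  have h3 := (ENNReal.eq_div_iff h0 ht).mp heq.symm
  rw [← h3, mul_comm]

lemma sStart_le (n : ℕ) : sStart a x n ≤ n := by
  induction n with
  | zero => simp [sStart]
  | succ n ih =>
    rw [sStart]
    split
    · exact le_refl _
    · exact le_trans ih (Nat.le_succ n)

lemma sStart_succ_cases (n : ℕ) :
    sStart a x (n+1) = n+1 ∧ sQ a x (sStart a x n) n = sSig a x (sStart a x n) ∨
    sStart a x (n+1) = sStart a x n ∧ ¬ sQ a x (sStart a x n) n = sSig a x (sStart a x n) := by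
  rw [sStart]
  split
  · left; exact ⟨rfl, by assumption⟩
  · right; exact ⟨rfl, by assumption⟩

lemma sStart_invariant : ∀ n m, sStart a x n ≤ m → m ≤ n → sStart a x m = sStart a x n := by
  intro n
  induction n with
  | zero =>
    intro m h1 h2
    have : m = 0 := Nat.le_zero.mp h2
    rw [this]
  | succ n ih =>
    intro m h1 h2
    rcases sStart_succ_cases (a := a) (x := x) n with ⟨he, _⟩ | ⟨he, _⟩
    · rw [he] at h1
      have : m = n+1 := le_antisymm h2 h1
      rw [this]
    · rw [he] at h1 ⊢
      rcases Nat.lt_succ_iff_lt_or_eq.mp (Nat.lt_succ_of_le h2) with h | h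
      · exact ih m h1 (by omega)
      · rw [h, he]

lemma sStart_start (n : ℕ) : sStart a x (sStart a x n) = sStart a x n :=
  sStart_invariant _ _ (le_refl _) (sStart_le n)

lemma ell_pos_of_ne {n : ℕ} (hx : x n ≠ 0) : 0 < sEll a x n := by
  have h1 : (‖x n‖₊ : ℝ≥0∞) ≤ sDX x (sStart a x n) (n+1) := by
    rw [sDX]
    exact Finset.single_le_sum (f := fun k => (‖x k‖₊ : ℝ≥0∞)) (fun i _ => zero_le)
      (Finset.mem_Ico.mpr ⟨sStart_le n, Nat.lt_succ_self n⟩)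
  have h2 : 0 < sQ a x (sStart a x n) n := by
    rw [sQ, ENNReal.div_pos_iff]
    constructor
    · refine fun h => hx ?_
      rw [h] at h1
      simpa using le_antisymm h1 (zero_le)
    · exact sDA_ne_top _ _
  exact lt_of_lt_of_le h2 (sQ_le_sSig (sStart_le n))

lemma ell_eq_zero_imp {n : ℕ} (h : sEll a x n = 0) : x n = 0 := by
  by_contra hx
  exact absurd h (ell_pos_of_ne (a := a) hx).ne'

end basics
noncomputable def sPP (a : ℕ → ℝ) (x : ℕ → ℂ) (q : ℝ) (n : ℕ) : ℝ≥0∞ :=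
  ∑ k ∈ range n, (‖x k‖₊ : ℝ≥0∞) * sEll a x k ^ (q-1)
noncomputable def sTT (a : ℕ → ℝ) (x : ℕ → ℂ) (q : ℝ) (n : ℕ) : ℝ≥0∞ :=
  ∑ k ∈ range n, sAW a k * sEll a x k ^ q

section blocks
variable {a : ℕ → ℝ} {x : ℕ → ℂ} {q : ℝ}

lemma rpow_sub_one_mul (hq1 : 1 ≤ q) (l : ℝ≥0∞) : l ^ (q-1) * l = l ^ q := by
  have := (ENNReal.rpow_add_of_nonneg (x := l) (q-1) 1 (by linarith) zero_le_one).symm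
  simpa using this

lemma sEll_succ_le (ha : ∀ n, 0 < a n) (hsf : ∀ m, sSig a x m ≠ ∞) (n : ℕ) :
    sEll a x (n+1) ≤ sEll a x n := by
  rcases sStart_succ_cases (a := a) (x := x) n with ⟨he, hQ⟩ | ⟨he, _⟩
  · rw [sEll, sEll, he]
    set s := sStart a x n with hs
    have hsn : s ≤ n := sStart_le n
    have heqX : sDX x s (n+1) = sSig a x s * sDA a s (n+1) := sDX_eq_of_attained ha hsn hQ
    refine iSup₂_le fun j hj => ?_
    have hle : sDX x s (j+1) ≤ sSig a x s * sDA a s (j+1) :=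
      sDX_le_of_le_sSig ha (le_trans hsn (by omega))
    rw [← sDX_add (x := x) (m := s) (k := n+1) (l := j+1) (by omega) (by omega),
      ← sDA_add (a := a) (m := s) (k := n+1) (l := j+1) (by omega) (by omega),
      mul_add, heqX] at hle
    have hfin : sSig a x s * sDA a s (n+1) ≠ ∞ := ENNReal.mul_ne_top (hsf s) (sDA_ne_top _ _)
    have h2 : sDX x (n+1) (j+1) ≤ sSig a x s * sDA a (n+1) (j+1) :=
      (ENNReal.add_le_add_iff_left hfin).mp hle
    rw [sQ, ENNReal.div_le_iff (sDA_pos ha hj).ne' (sDA_ne_top _ _)]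
    exact h2
  · rw [sEll, sEll, he]

lemma sEll_antitone (ha : ∀ n, 0 < a n) (hsf : ∀ m, sSig a x m ≠ ∞) :
    Antitone (sEll a x) :=
  antitone_nat_of_succ_le (sEll_succ_le ha hsf)

lemma sEll_eq_on_block (n : ℕ) {k : ℕ} (h1 : sStart a x n ≤ k) (h2 : k ≤ n) :
    sEll a x k = sSig a x (sStart a x n) := by
  rw [sEll, sStart_invariant n k h1 h2]

lemma sTT_decomp (n : ℕ) :
    sTT a x q (n+1) = sTT a x q (sStart a x n) +
      (sEll a x n) ^ q * sDA a (sStart a x n) (n+1) := by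
  set s := sStart a x n with hs
  have hsn : s ≤ n := sStart_le n
  rw [sTT, ← Finset.sum_range_add_sum_Ico _ (show s ≤ n+1 by omega)]
  congr 1
  rw [sDA, Finset.mul_sum]
  refine Finset.sum_congr rfl fun k hk => ?_
  rcases Finset.mem_Ico.mp hk with ⟨hk1, hk2⟩
  rw [sEll_eq_on_block n hk1 (by omega), sEll]
  ring

lemma sPP_invariant (ha : ∀ n, 0 < a n) (hq1 : 1 ≤ q) : ∀ n,
    sPP a x q (n+1) = sTT a x q (sStart a x n) +
      (sEll a x n) ^ (q-1) * sDX x (sStart a x n) (n+1) ∧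
    sPP a x q (sStart a x n) = sTT a x q (sStart a x n) := by
  intro n
  induction n with
  | zero =>
    constructor
    · have h0 : sStart a x 0 = 0 := rfl
      rw [h0, sPP, sTT]
      simp only [Finset.range_one, Finset.sum_singleton, Finset.range_zero,
        Finset.sum_empty, zero_add]
      rw [sDX, Nat.Ico_succ_singleton]
      simp [mul_comm]
    · have h0 : sStart a x 0 = 0 := rfl
      rw [h0, sPP, sTT]
      simp
  | succ n ih =>
    have hDXs : sDX x (n+1) (n+1+1) = (‖x (n+1)‖₊ : ℝ≥0∞) := by
      rw [sDX, Nat.Ico_succ_singleton, Finset.sum_singleton]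
    rcases sStart_succ_cases (a := a) (x := x) n with ⟨he, hQ⟩ | ⟨he, _⟩
    · -- new block at n+1
      have heqX : sDX x (sStart a x n) (n+1) =
          sSig a x (sStart a x n) * sDA a (sStart a x n) (n+1) :=
        sDX_eq_of_attained ha (sStart_le n) hQ
      have hPT : sPP a x q (n+1) = sTT a x q (n+1) := by
        rw [ih.1, heqX, sEll, ← mul_assoc, rpow_sub_one_mul hq1, sTT_decomp, sEll]
      constructor
      · rw [sPP, Finset.sum_range_succ, ← sPP, hPT, he, hDXs, sEll, he]
        ring
      · rw [he, hPT]
    · constructor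
      · rw [sPP, Finset.sum_range_succ, ← sPP, ih.1, he]
        have hEll : sEll a x (n+1) = sEll a x n := by rw [sEll, sEll, he]
        rw [hEll, ← sDX_add (x := x) (m := sStart a x n) (k := n+1) (l := n+1+1)
          (by have := sStart_le (a := a) (x := x) n; omega) (by omega), hDXs]
        ring
      · rw [he]; exact ih.2
  end blocks

section blocks2
variable {a : ℕ → ℝ} {x : ℕ → ℂ} {q : ℝ}

lemma sTT_mono : Monotone (sTT a x q) := by
  intro m n h
  exact Finset.sum_le_sum_of_subset (Finset.range_subset_range.mpr h)

lemma sPP_le_sTT (ha : ∀ n, 0 < a n) (hq1 : 1 ≤ q) (n : ℕ) :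
    sPP a x q n ≤ sTT a x q n := by
  cases n with
  | zero => simp [sPP, sTT]
  | succ n =>
    rw [(sPP_invariant ha hq1 n).1, sTT_decomp, sEll]
    refine add_le_add_right ?_ _
    calc sSig a x (sStart a x n) ^ (q-1) * sDX x (sStart a x n) (n+1)
        ≤ sSig a x (sStart a x n) ^ (q-1) *
          (sSig a x (sStart a x n) * sDA a (sStart a x n) (n+1)) :=
          mul_le_mul_right (sDX_le_of_le_sSig ha (sStart_le n)) _
      _ = sSig a x (sStart a x n) ^ q * sDA a (sStart a x n) (n+1) := by
          rw [← mul_assoc, rpow_sub_one_mul hq1]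

lemma sDX_mono (m : ℕ) : Monotone (sDX x m) := fun j k h =>
  Finset.sum_le_sum_of_subset (Finset.Ico_subset_Ico le_rfl h)

/-- In an infinite tail block starting at `s` (the supremum never attained),
`sSig s * sDA s n' ≤ ⨆ j, sDX s (j+1)`. -/
lemma sig_le_tail_sup (ha : ∀ n, 0 < a n) {s : ℕ}
    (hnot : ∀ j, s ≤ j → sQ a x s j ≠ sSig a x s) (n' : ℕ) :
    sSig a x s ≤ ⨆ j, ⨆ _ : n' ≤ j, sQ a x s j := by
  by_contra hcon
  push_neg at hcon
  set b := ⨆ j, ⨆ _ : n' ≤ j, sQ a x s j with hb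
  -- obtain j* with b < sQ s j*
  have h1 : b < sSig a x s := hcon
  rw [sSig, lt_iSup_iff] at h1
  obtain ⟨jstar, hjs⟩ := h1
  have hjs2 : s ≤ jstar ∧ b < sQ a x s jstar := by
    by_cases hmem : s ≤ jstar
    · refine ⟨hmem, ?_⟩
      simpa [hmem] using hjs
    · exfalso
      simp [hmem] at hjs
  have hjlt : jstar < n' := by
    by_contra hge
    push_neg at hge
    have : sQ a x s jstar ≤ b :=
      le_iSup₂ (f := fun j (_ : n' ≤ j) => sQ a x s j) jstar hge
    exact absurd (lt_of_lt_of_le hjs2.2 this) (lt_irrefl _)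
  have hne : (Finset.Ico s n').Nonempty := ⟨jstar, Finset.mem_Ico.mpr ⟨hjs2.1, hjlt⟩⟩
  obtain ⟨j1, hj1mem, hj1max⟩ := Finset.exists_max_image (Finset.Ico s n') (sQ a x s) hne
  rcases Finset.mem_Ico.mp hj1mem with ⟨hj1s, hj1lt⟩
  have hsig_le : sSig a x s ≤ sQ a x s j1 := by
    refine iSup₂_le fun j hj => ?_
    by_cases hjn : j < n'
    · exact hj1max j (Finset.mem_Ico.mpr ⟨hj, hjn⟩)
    · push_neg at hjn
      calc sQ a x s j ≤ b := le_iSup₂ (f := fun j (_ : n' ≤ j) => sQ a x s j) j hjn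
        _ ≤ sQ a x s jstar := le_of_lt hjs2.2
        _ ≤ sQ a x s j1 := hj1max jstar (Finset.mem_Ico.mpr ⟨hjs2.1, hjlt⟩)
  exact hnot j1 hj1s (le_antisymm (sQ_le_sSig hj1s) hsig_le)

lemma tail_block_bound (ha : ∀ n, 0 < a n) {s : ℕ}
    (hnot : ∀ j, s ≤ j → sQ a x s j ≠ sSig a x s) (n' : ℕ) :
    sSig a x s * sDA a s n' ≤ ⨆ j, sDX x s (j+1) := by
  have hkey : sSig a x s ≤ ⨆ j, ⨆ _ : n' ≤ j, sQ a x s j := sig_le_tail_sup ha hnot n'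
  calc sSig a x s * sDA a s n'
      ≤ (⨆ j, ⨆ _ : n' ≤ j, sQ a x s j) * sDA a s n' := mul_le_mul_left hkey _
    _ = ⨆ j, (⨆ _ : n' ≤ j, sQ a x s j) * sDA a s n' := ENNReal.iSup_mul _ _
    _ ≤ ⨆ j, sDX x s (j+1) := by
      refine iSup_le fun j => ?_
      by_cases hj : n' ≤ j
      · simp only [hj, iSup_pos]
        by_cases hsj : s ≤ j
        · calc sQ a x s j * sDA a s n' ≤ sQ a x s j * sDA a s (j+1) :=
              mul_le_mul_right (Finset.sum_le_sum_of_subset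
                (Finset.Ico_subset_Ico le_rfl (by omega))) _
            _ = sDX x s (j+1) := by
              rw [sQ, ENNReal.div_mul_cancel (sDA_pos ha hsj).ne' (sDA_ne_top _ _)]
            _ ≤ ⨆ j, sDX x s (j+1) := le_iSup (fun j => sDX x s (j+1)) j
        · push_neg at hsj
          have hz : sDA a s (j+1) = 0 := by
            rw [sDA, Finset.Ico_eq_empty (by omega), Finset.sum_empty]
          have h1 : sDA a s n' ≤ sDA a s (j+1) := Finset.sum_le_sum_of_subset
            (Finset.Ico_subset_Ico le_rfl (by omega))
          have h0 : sDA a s n' = 0 := le_antisymm (hz ▸ h1) (zero_le)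
          rw [h0, mul_zero]
          exact zero_le
      · simp [hj]

lemma sTT_le_iSup_sPP (ha : ∀ n, 0 < a n) (hq1 : 1 ≤ q) (n : ℕ) :
    sTT a x q n ≤ ⨆ m, sPP a x q m := by
  by_cases hc : ∃ m, n ≤ m ∧ sStart a x m = m
  · obtain ⟨m, hm1, hm2⟩ := hc
    calc sTT a x q n ≤ sTT a x q m := sTT_mono hm1
      _ = sPP a x q m := by
          have := (sPP_invariant (a := a) (x := x) ha hq1 m).2
          rw [hm2] at this
          exact this.symm
      _ ≤ ⨆ m, sPP a x q m := le_iSup _ m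
  · push_neg at hc
    cases n with
    | zero =>
      simp [sTT]
    | succ m =>
      have hsm : sStart a x (m+1) = sStart a x m := by
        rcases sStart_succ_cases (a := a) (x := x) m with ⟨he, _⟩ | ⟨he, _⟩
        · exact absurd he (hc (m+1) (le_refl _))
        · exact he
      set s := sStart a x m with hs
      have hsle : s ≤ m := sStart_le m
      -- all later starts equal s
      have hstart_all : ∀ j, s ≤ j → sStart a x j = s := by
        intro j hj
        by_cases hjm : j ≤ m
        · exact sStart_invariant m j hj hjm
        · push_neg at hjm
          -- induction from m+1 up to j
          have : ∀ d, sStart a x (m+1+d) = s := by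
            intro d
            induction d with
            | zero => simpa using hsm
            | succ d ihd =>
              rcases sStart_succ_cases (a := a) (x := x) (m+1+d) with ⟨he, _⟩ | ⟨he, _⟩
              · exact absurd he (hc (m+1+d+1) (by omega))
              · rw [show m+1+(d+1) = m+1+d+1 by omega, he, ihd]
          have hj' : j = m+1+(j-m-1) := by omega
          rw [hj']
          exact this _
      have hnot : ∀ j, s ≤ j → sQ a x s j ≠ sSig a x s := by
        intro j hj hQ
        have h1 : sStart a x (j+1) = s := hstart_all (j+1) (by omega)
        rcases sStart_succ_cases (a := a) (x := x) j with ⟨he, _⟩ | ⟨_, hne⟩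
        · rw [he] at h1; omega
        · rw [hstart_all j hj] at hne
          exact hne hQ
      have hPs : sPP a x q s = sTT a x q s := by
        have := (sPP_invariant (a := a) (x := x) ha hq1 m).2
        rwa [← hs] at this
      rw [sTT_decomp, ← hs, sEll, ← hs]
      calc sTT a x q s + sSig a x s ^ q * sDA a s (m+1)
          = sTT a x q s + sSig a x s ^ (q-1) * (sSig a x s * sDA a s (m+1)) := by
            rw [← mul_assoc, rpow_sub_one_mul hq1]
        _ ≤ sTT a x q s + sSig a x s ^ (q-1) * ⨆ j, sDX x s (j+1) :=
            add_le_add_right (mul_le_mul_right (tail_block_bound ha hnot (m+1)) _) _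
        _ = ⨆ j, (sTT a x q s + sSig a x s ^ (q-1) * sDX x s (j+1)) := by
            rw [ENNReal.mul_iSup, ENNReal.add_iSup]
        _ ≤ ⨆ m', sPP a x q m' := by
            refine iSup_le fun j => ?_
            by_cases hsj : s ≤ j
            · have : sPP a x q (j+1) =
                  sTT a x q s + sSig a x s ^ (q-1) * sDX x s (j+1) := by
                have h1 := (sPP_invariant (a := a) (x := x) ha hq1 j).1
                rw [hstart_all j hsj, sEll, hstart_all j hsj] at h1
                exact h1
              rw [← this]
              exact le_iSup _ (j+1)
            · push_neg at hsj
              have hz : sDX x s (j+1) = 0 := by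
                rw [sDX, Finset.Ico_eq_empty (by omega), Finset.sum_empty]
              rw [hz, mul_zero, add_zero, ← hPs]
              exact le_iSup _ s

end blocks2

section dual
variable {a : ℕ → ℝ} {x : ℕ → ℂ} {p q : ℝ}

lemma coe_nnnorm_toReal {e : ℝ≥0∞} (he : e ≠ ∞) :
    (‖((e.toReal : ℝ) : ℂ)‖₊ : ℝ≥0∞) = e := by
  rw [Complex.nnnorm_real, ← enorm_eq_nnnorm, Real.enorm_eq_ofReal ENNReal.toReal_nonneg,
    ENNReal.ofReal_toReal he]

lemma pairing_le_dDualNorm {u : ℕ → ℂ} (hu : dNorm a p u ≤ 1) :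
    ∑' n, (‖x n‖₊ : ℝ≥0∞) * (‖u n‖₊ : ℝ≥0∞) ≤ dDualNorm a p x := by
  rw [dDualNorm]
  exact le_iSup_of_le u (le_iSup_of_le hu le_rfl)

lemma sup_trunc_eq {v : ℕ → ℝ≥0∞} (hv : Antitone v) {n : ℕ} {u : ℕ → ℂ}
    (hu1 : ∀ k, k < n → (‖u k‖₊ : ℝ≥0∞) = v k) (hu2 : ∀ k, n ≤ k → u k = 0)
    (hp0 : 0 < p) (m : ℕ) :
    (⨆ k, ⨆ _ : m ≤ k, (‖u k‖₊ : ℝ≥0∞) ^ p) = if m < n then v m ^ p else 0 := by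
  split_ifs with h
  · apply le_antisymm
    · refine iSup₂_le fun k hk => ?_
      by_cases hkn : k < n
      · rw [hu1 k hkn]
        exact ENNReal.rpow_le_rpow (hv hk) hp0.le
      · push_neg at hkn
        rw [hu2 k hkn]
        simp [ENNReal.zero_rpow_of_pos hp0]
    · have h1 := le_iSup₂ (f := fun k (_ : m ≤ k) => (‖u k‖₊ : ℝ≥0∞) ^ p) m le_rfl
      rwa [hu1 m h] at h1
  · push_neg at h
    apply le_antisymm
    · refine iSup₂_le fun k hk => ?_
      rw [hu2 k (le_trans h hk)]
      simp [ENNReal.zero_rpow_of_pos hp0]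
    · exact zero_le

lemma sXX_le_dDualNorm (hp1 : 1 < p) (ha : ∀ n, 0 < a n) (n : ℕ) :
    sXX x n ≤ dDualNorm a p x * (sAA a n) ^ (1/p) := by
  have hp0 : (0:ℝ) < p := lt_trans one_pos hp1
  cases n with
  | zero => simp [sXX]
  | succ n' =>
    set N := n' + 1 with hN
    have hAApos : 0 < sAA a N := by
      refine lt_of_lt_of_le (sAW_pos ha 0) ?_
      rw [sAA]
      exact Finset.single_le_sum (f := fun k => sAW a k) (fun i _ => zero_le)
        (Finset.mem_range.mpr (by omega))
    set r : ℝ≥0∞ := (sAA a N) ^ (1/p) with hr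
    have hr0 : r ≠ 0 := by
      rw [hr]
      simp only [ne_eq, ENNReal.rpow_eq_zero_iff, not_or]
      constructor
      · rintro ⟨h1, _⟩; exact absurd h1 hAApos.ne'
      · rintro ⟨h1, _⟩; exact absurd h1 (sAA_ne_top N)
    have hrt : r ≠ ∞ := by
      rw [hr]
      exact ENNReal.rpow_ne_top_of_nonneg (by positivity) (sAA_ne_top N)
    have hrp : r ^ p = sAA a N := by
      rw [hr, ← ENNReal.rpow_mul, one_div_mul_cancel hp0.ne', ENNReal.rpow_one]
    set u : ℕ → ℂ := fun k => if k < N then (((r⁻¹).toReal : ℝ) : ℂ) else 0 with hu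
    have hval : ∀ k, k < N → (‖u k‖₊ : ℝ≥0∞) = r⁻¹ := by
      intro k hk
      rw [hu]
      simp only [hk, if_pos]
      exact coe_nnnorm_toReal (ENNReal.inv_ne_top.mpr hr0)
    have hzero : ∀ k, N ≤ k → u k = 0 := by
      intro k hk
      rw [hu]
      exact if_neg (Nat.not_lt.mpr hk)
    have hsup := sup_trunc_eq (v := fun _ => r⁻¹) (fun _ _ _ => le_rfl) hval hzero hp0
    have hdn : dNorm a p u ≤ 1 := by
      rw [dNorm]
      have hts : ∑' m, ENNReal.ofReal (a m) * (⨆ k, ⨆ _ : m ≤ k, (‖u k‖₊ : ℝ≥0∞) ^ p) = 1 := by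
        rw [tsum_eq_sum (s := Finset.range N) (by
          intro m hm
          rw [hsup m, if_neg (by simpa using hm), mul_zero])]
        have : ∀ m ∈ Finset.range N, ENNReal.ofReal (a m) *
            (⨆ k, ⨆ _ : m ≤ k, (‖u k‖₊ : ℝ≥0∞) ^ p) = sAW a m * (r ^ p)⁻¹ := by
          intro m hm
          rw [hsup m, if_pos (Finset.mem_range.mp hm), ENNReal.inv_rpow]
          rfl
        rw [Finset.sum_congr rfl this, ← Finset.sum_mul, hrp]
        exact ENNReal.mul_inv_cancel hAApos.ne' (sAA_ne_top N)
      rw [hts, ENNReal.one_rpow]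
    have hpair : ∑' k, (‖x k‖₊ : ℝ≥0∞) * (‖u k‖₊ : ℝ≥0∞) = sXX x N * r⁻¹ := by
      rw [tsum_eq_sum (s := Finset.range N) (by
        intro k hk
        rw [hzero k (by simpa using hk)]
        simp)]
      rw [Finset.sum_congr rfl (fun k hk => by
        rw [hval k (Finset.mem_range.mp hk)] :
        ∀ k ∈ Finset.range N, (‖x k‖₊ : ℝ≥0∞) * (‖u k‖₊ : ℝ≥0∞) = (‖x k‖₊ : ℝ≥0∞) * r⁻¹),
        sXX, ← Finset.sum_mul]
    have hle : sXX x N * r⁻¹ ≤ dDualNorm a p x := by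
      rw [← hpair]
      exact pairing_le_dDualNorm hdn
    calc sXX x N = sXX x N * r⁻¹ * r := by
          rw [mul_assoc, ENNReal.inv_mul_cancel hr0 hrt, mul_one]
      _ ≤ dDualNorm a p x * r := mul_le_mul_left hle r

lemma rpow_one_div_le_one_add (hp1 : 1 < p) (e : ℝ≥0∞) : e ^ (1/p) ≤ 1 + e := by
  have hp0 : (0:ℝ) < p := lt_trans one_pos hp1
  by_cases h : e ≤ 1
  · exact le_trans (ENNReal.rpow_le_one h (by positivity)) le_self_add
  · push_neg at h
    calc e ^ (1/p) ≤ e ^ (1:ℝ) := ENNReal.rpow_le_rpow_of_exponent_le h.le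
          (by rw [div_le_one hp0]; exact hp1.le)
      _ = e := ENNReal.rpow_one e
      _ ≤ 1 + e := le_add_self
  
lemma sSig_ne_top (hp1 : 1 < p) (ha : ∀ n, 0 < a n) (hM : dDualNorm a p x ≠ ∞) (m : ℕ) :
    sSig a x m ≠ ∞ := by
  set M := dDualNorm a p x with hMdef
  have hbound : sSig a x m ≤ M * (1 + sAA a m) / sAW a m + M := by
    refine iSup₂_le fun j hj => ?_
    have hB0 : sDA a m (j+1) ≠ 0 := (sDA_pos ha hj).ne'
    have hBt : sDA a m (j+1) ≠ ∞ := sDA_ne_top m (j+1)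
    have h1 : sDX x m (j+1) ≤ M * (1 + sAA a m + sDA a m (j+1)) := by
      calc sDX x m (j+1) ≤ sXX x (j+1) := sDX_le_sXX m (j+1)
        _ ≤ M * (sAA a (j+1)) ^ (1/p) := sXX_le_dDualNorm hp1 ha (j+1)
        _ ≤ M * (1 + sAA a (j+1)) := mul_le_mul_right (rpow_one_div_le_one_add hp1 _) M
        _ = M * (1 + sAA a m + sDA a m (j+1)) := by
            rw [add_assoc]
            congr 2
            rw [sAA, sAA, sDA, Finset.sum_range_add_sum_Ico _ (show m ≤ j+1 by omega)]
    calc sQ a x m j ≤ M * (1 + sAA a m + sDA a m (j+1)) / sDA a m (j+1) :=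
          ENNReal.div_le_div_right h1 _
      _ = (M * (1 + sAA a m) + M * sDA a m (j+1)) / sDA a m (j+1) := by rw [mul_add]
      _ = M * (1 + sAA a m) / sDA a m (j+1) + M * sDA a m (j+1) / sDA a m (j+1) := by
          rw [ENNReal.div_add_div_same]
      _ ≤ M * (1 + sAA a m) / sAW a m + M := by
          refine add_le_add (ENNReal.div_le_div_left ?_ _) ?_
          · rw [sDA]
            exact Finset.single_le_sum (f := fun k => sAW a k) (fun i _ => zero_le)
              (Finset.mem_Ico.mpr ⟨le_rfl, by omega⟩)
          · rw [mul_div_assoc, ENNReal.div_self hB0 hBt, mul_one]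
  refine ne_top_of_le_ne_top ?_ hbound
  refine ENNReal.add_ne_top.mpr ⟨?_, hM⟩
  exact (ENNReal.div_lt_top (ENNReal.mul_ne_top hM (by
    refine ENNReal.add_ne_top.mpr ⟨ENNReal.one_ne_top, sAA_ne_top m⟩))
    (sAW_pos ha m).ne').ne

lemma sTT_ne_top (hsf : ∀ m, sSig a x m ≠ ∞) (hq0 : 0 ≤ q) (n : ℕ) :
    sTT a x q n ≠ ∞ := by
  rw [sTT]
  refine (ENNReal.sum_lt_top.mpr fun k _ => ?_).ne
  exact (ENNReal.mul_lt_top (sAW_ne_top k).lt_top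
    (ENNReal.rpow_ne_top_of_nonneg hq0 (hsf _)).lt_top)

lemma test_bound (hp1 : 1 < p) (hq1 : 1 ≤ q) (hqp : (q-1)*p = q)
    (ha : ∀ n, 0 < a n) (hsf : ∀ m, sSig a x m ≠ ∞) (n : ℕ)
    (hT0 : sTT a x q n ≠ 0) :
    sPP a x q n / (sTT a x q n) ^ (1/p) ≤ dDualNorm a p x := by
  have hp0 : (0:ℝ) < p := lt_trans one_pos hp1
  have hTt : sTT a x q n ≠ ∞ := sTT_ne_top hsf (by linarith) n
  set c : ℝ≥0∞ := (sTT a x q n) ^ (1/p) with hc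
  have hc0 : c ≠ 0 := by
    rw [hc]
    simp only [ne_eq, ENNReal.rpow_eq_zero_iff, not_or]
    exact ⟨fun ⟨h1, _⟩ => hT0 h1, fun ⟨h1, _⟩ => hTt h1⟩
  have hct : c ≠ ∞ := ENNReal.rpow_ne_top_of_nonneg (by positivity) hTt
  have hcp : c ^ p = sTT a x q n := by
    rw [hc, ← ENNReal.rpow_mul, one_div_mul_cancel hp0.ne', ENNReal.rpow_one]
  set v : ℕ → ℝ≥0∞ := fun k => sEll a x k ^ (q-1) / c with hv
  have hvmono : Antitone v := by
    intro i j h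
    exact ENNReal.div_le_div_right
      (ENNReal.rpow_le_rpow (sEll_antitone ha hsf h) (by linarith)) c
  have hvt : ∀ k, v k ≠ ∞ := fun k =>
    (ENNReal.div_lt_top (ENNReal.rpow_ne_top_of_nonneg (by linarith) (hsf _)) hc0).ne
  set u : ℕ → ℂ := fun k => if k < n then (((v k).toReal : ℝ) : ℂ) else 0 with hu
  have hval : ∀ k, k < n → (‖u k‖₊ : ℝ≥0∞) = v k := by
    intro k hk
    rw [hu]
    simp only [hk, if_pos]
    exact coe_nnnorm_toReal (hvt k)
  have hzero : ∀ k, n ≤ k → u k = 0 := by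
    intro k hk
    rw [hu]
    exact if_neg (Nat.not_lt.mpr hk)
  have hsup := sup_trunc_eq hvmono hval hzero hp0
  have hvp : ∀ k, v k ^ p = sEll a x k ^ q / sTT a x q n := by
    intro k
    rw [hv]
    simp only
    rw [ENNReal.div_rpow_of_nonneg _ _ hp0.le, ← ENNReal.rpow_mul, hqp, hcp]
  have hdn : dNorm a p u ≤ 1 := by
    rw [dNorm]
    have hts : ∑' m, ENNReal.ofReal (a m) * (⨆ k, ⨆ _ : m ≤ k, (‖u k‖₊ : ℝ≥0∞) ^ p) = 1 := by
      rw [tsum_eq_sum (s := Finset.range n) (by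
        intro m hm
        rw [hsup m, if_neg (by simpa using hm), mul_zero])]
      have heach : ∀ m ∈ Finset.range n, ENNReal.ofReal (a m) *
          (⨆ k, ⨆ _ : m ≤ k, (‖u k‖₊ : ℝ≥0∞) ^ p) =
          (sAW a m * sEll a x m ^ q) * (sTT a x q n)⁻¹ := by
        intro m hm
        rw [hsup m, if_pos (Finset.mem_range.mp hm), hvp m, div_eq_mul_inv, ← mul_assoc]
        rfl
      rw [Finset.sum_congr rfl heach, ← Finset.sum_mul, ← sTT]
      exact ENNReal.mul_inv_cancel hT0 hTt
    rw [hts, ENNReal.one_rpow]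
  have hpair : ∑' k, (‖x k‖₊ : ℝ≥0∞) * (‖u k‖₊ : ℝ≥0∞) = sPP a x q n / c := by
    rw [tsum_eq_sum (s := Finset.range n) (by
      intro k hk
      rw [hzero k (by simpa using hk)]
      simp)]
    rw [Finset.sum_congr rfl (fun k hk => by
      rw [hval k (Finset.mem_range.mp hk), hv]
      simp only
      rw [div_eq_mul_inv, ← mul_assoc] :
      ∀ k ∈ Finset.range n, (‖x k‖₊ : ℝ≥0∞) * (‖u k‖₊ : ℝ≥0∞) =
        ((‖x k‖₊ : ℝ≥0∞) * sEll a x k ^ (q-1)) * c⁻¹),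
      sPP, div_eq_mul_inv, ← Finset.sum_mul]
  rw [← hpair]
  exact pairing_le_dDualNorm hdn

end dual

section mainbound
variable {a : ℕ → ℝ} {x : ℕ → ℂ} {p q : ℝ}

lemma exists_of_lt_biSup {b : ℝ≥0∞} {f : ℕ → ℝ≥0∞} {P : ℕ → Prop}
    (h : b < ⨆ j, ⨆ _ : P j, f j) : ∃ j, P j ∧ b < f j := by
  rw [lt_iSup_iff] at h
  obtain ⟨j, hj⟩ := h
  by_cases hP : P j
  · exact ⟨j, hP, by simpa [hP] using hj⟩
  · simp [hP] at hj

lemma le_of_le_mul_rpow (hp0 : 0 < p) (hq0 : 0 < q) (hpq : 1/p + 1/q = 1)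
    {t M : ℝ≥0∞} (ht : t ≠ ∞) (h : t ≤ M * t ^ (1/p)) : t ≤ M ^ q := by
  by_cases ht0 : t = 0
  · rw [ht0]; exact zero_le
  · have hsplit : t = t ^ (1/q) * t ^ (1/p) := by
      rw [← ENNReal.rpow_add_of_nonneg _ _ (by positivity) (by positivity)]
      rw [show 1/q + 1/p = 1 by linarith, ENNReal.rpow_one]
    have hcancel : t ^ (1/q) ≤ M := by
      have h2 : t ^ (1/q) * t ^ (1/p) ≤ M * t ^ (1/p) := by rw [← hsplit]; exact h
      refine (ENNReal.mul_le_mul_iff_left ?_ ?_).mp h2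
      · simp only [ne_eq, ENNReal.rpow_eq_zero_iff, not_or]
        exact ⟨fun ⟨h1, _⟩ => ht0 h1, fun ⟨h1, _⟩ => ht h1⟩
      · exact ENNReal.rpow_ne_top_of_nonneg (by positivity) ht
    calc t = (t ^ (1/q)) ^ q := by
          rw [← ENNReal.rpow_mul, one_div_mul_cancel hq0.ne', ENNReal.rpow_one]
      _ ≤ M ^ q := ENNReal.rpow_le_rpow hcancel hq0.le

lemma sPP_le_mul_rpow (hp1 : 1 < p) (hq1 : 1 ≤ q) (hqp : (q-1)*p = q)
    (ha : ∀ n, 0 < a n) (hsf : ∀ m, sSig a x m ≠ ∞) (m : ℕ) :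
    sPP a x q m ≤ dDualNorm a p x * (sTT a x q m) ^ (1/p) := by
  by_cases hT0 : sTT a x q m = 0
  · calc sPP a x q m ≤ sTT a x q m := sPP_le_sTT ha hq1 m
      _ = 0 := hT0
      _ ≤ _ := zero_le
  · have htest := test_bound hp1 hq1 hqp ha hsf m hT0
    have hc0 : (sTT a x q m) ^ (1/p) ≠ 0 := by
      simp only [ne_eq, ENNReal.rpow_eq_zero_iff, not_or]
      exact ⟨fun ⟨h1, _⟩ => hT0 h1, fun ⟨h1, _⟩ => (sTT_ne_top hsf (by linarith) m) h1⟩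
    have hct : (sTT a x q m) ^ (1/p) ≠ ∞ :=
      ENNReal.rpow_ne_top_of_nonneg (by positivity) (sTT_ne_top hsf (by linarith) m)
    calc sPP a x q m = sPP a x q m / (sTT a x q m) ^ (1/p) * (sTT a x q m) ^ (1/p) := by
          rw [ENNReal.div_mul_cancel hc0 hct]
      _ ≤ dDualNorm a p x * (sTT a x q m) ^ (1/p) := mul_le_mul_left htest _

lemma sTT_le_Mq (hp1 : 1 < p) (hpq : 1/p + 1/q = 1) (hq1 : 1 ≤ q) (hq0 : 0 < q)
    (hqp : (q-1)*p = q) (ha : ∀ n, 0 < a n) (hM : dDualNorm a p x ≠ ∞) (n : ℕ) :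
    sTT a x q n ≤ (dDualNorm a p x) ^ q := by
  have hp0 : (0:ℝ) < p := lt_trans one_pos hp1
  have hsf : ∀ m, sSig a x m ≠ ∞ := sSig_ne_top hp1 ha hM
  set M := dDualNorm a p x with hMdef
  have hTfin : ∀ m, sTT a x q m ≠ ∞ := sTT_ne_top hsf (by linarith)
  have hblock : ∀ m, sStart a x m = m → sTT a x q m ≤ M ^ q := by
    intro m hm
    have hPT : sPP a x q m = sTT a x q m := by
      have := (sPP_invariant (a := a) (x := x) ha hq1 m).2
      rwa [hm] at this
    have h2 := sPP_le_mul_rpow (x := x) hp1 hq1 hqp ha hsf m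
    rw [hPT] at h2
    exact le_of_le_mul_rpow hp0 hq0 hpq (hTfin m) h2
  by_cases hbs : ∃ m, n ≤ m ∧ sStart a x m = m
  · obtain ⟨m, hm1, hm2⟩ := hbs
    exact le_trans (sTT_mono hm1) (hblock m hm2)
  · push_neg at hbs
    set s := sStart a x n with hs
    have hsle : s ≤ n := sStart_le n
    have hstart_all : ∀ j, s ≤ j → sStart a x j = s := by
      intro j hj
      by_cases hjm : j ≤ n
      · exact sStart_invariant n j hj hjm
      · push_neg at hjm
        have key : ∀ d, sStart a x (n+d) = s := by
          intro d
          induction d with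
          | zero => simp [hs]
          | succ d ihd =>
            show sStart a x (n+d+1) = s
            rcases sStart_succ_cases (a := a) (x := x) (n+d) with ⟨he, _⟩ | ⟨he, _⟩
            · exact absurd he (hbs (n+d+1) (by omega))
            · rw [he, ihd]
        have : j = n + (j - n) := by omega
        rw [this]
        exact key _
    have hnot : ∀ j, s ≤ j → sQ a x s j ≠ sSig a x s := by
      intro j hj hQ
      have h1 : sStart a x (j+1) = s := hstart_all (j+1) (by omega)
      rcases sStart_succ_cases (a := a) (x := x) j with ⟨he, _⟩ | ⟨_, hne⟩
      · rw [he] at h1; omega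
      · rw [hstart_all j hj] at hne
        exact hne hQ
    have hTs : sTT a x q s ≤ M ^ q := hblock s (by rw [hs]; exact sStart_start n)
    have hdecomp : ∀ k, s ≤ k → sTT a x q (k+1) =
        sTT a x q s + (sSig a x s) ^ q * sDA a s (k+1) := by
      intro k hk
      rw [sTT_decomp, hstart_all k hk, sEll, hstart_all k hk]
    by_cases hl : sSig a x s = 0
    · cases n with
      | zero => simpa [sTT] using zero_le
      | succ k =>
        have hsk : s ≤ k := by
          have hne := hbs (k+1) le_rfl
          have h2 : s ≠ k+1 := fun h => hne (h ▸ hs.symm)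
          omega
        rw [hdecomp k hsk, hl, ENNReal.zero_rpow_of_pos hq0, zero_mul, add_zero]
        exact hTs
    · set W := ⨆ j, sDA a s (j+1) with hW
      by_cases hWt : W = ∞
      · -- impossible: leads to contradiction
        exfalso
        set b := sSig a x s / 2 with hb
        have hb0 : b ≠ 0 := by
          rw [hb]
          simp only [ne_eq, ENNReal.div_eq_zero_iff, not_or]
          exact ⟨hl, ENNReal.ofNat_ne_top⟩
        have hbt : b ≠ ∞ := by
          rw [hb]
          exact (ENNReal.div_lt_top (hsf s) two_ne_zero).ne
        have hbl : b < sSig a x s := ENNReal.half_lt_self hl (hsf s)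
        set K := (2:ℝ≥0∞) ^ (1/p) * M / b with hK
        have hKt : K ≠ ∞ := by
          rw [hK]
          exact (ENNReal.div_lt_top (ENNReal.mul_ne_top
            (ENNReal.rpow_ne_top_of_nonneg (by positivity) ENNReal.ofNat_ne_top) hM) hb0).ne
        have hKq : K ^ q ≠ ∞ := ENNReal.rpow_ne_top_of_nonneg hq0.le hKt
        set C := sAA a s + K ^ q + 1 with hC
        have hCt : C ≠ ∞ := by
          rw [hC]
          exact ENNReal.add_ne_top.mpr ⟨ENNReal.add_ne_top.mpr ⟨sAA_ne_top s, hKq⟩,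
            ENNReal.one_ne_top⟩
        obtain ⟨j0, hj0⟩ : ∃ j0, C < sDA a s (j0+1) := by
          have : C < W := by rw [hWt]; exact hCt.lt_top
          rwa [hW, lt_iSup_iff] at this
        -- get near-maximizer beyond j0+1
        have hkey : sSig a x s ≤ ⨆ j, ⨆ _ : (j0+1) ≤ j, sQ a x s j :=
          sig_le_tail_sup ha hnot (j0+1)
        obtain ⟨j, hjge, hjQ⟩ : ∃ j, (j0+1) ≤ j ∧ b < sQ a x s j :=
          exists_of_lt_biSup (lt_of_lt_of_le hbl hkey)
        have hsj0 : s ≤ j0 := by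
          by_contra hcon
          push_neg at hcon
          have : sDA a s (j0+1) = 0 := by
            rw [sDA, Finset.Ico_eq_empty (by omega), Finset.sum_empty]
          rw [this] at hj0
          exact absurd hj0 (not_lt.mpr (zero_le))
        have hsj : s ≤ j := by omega
        set B := sDA a s (j+1) with hB
        have hB0 : B ≠ 0 := (sDA_pos ha hsj).ne'
        have hBt : B ≠ ∞ := sDA_ne_top _ _
        have hCB : C < B := by
          refine lt_of_lt_of_le hj0 ?_
          rw [hB, sDA, sDA]
          exact Finset.sum_le_sum_of_subset (Finset.Ico_subset_Ico le_rfl (by omega))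
        have hbB : b * B < sDX x s (j+1) := by
          rw [← ENNReal.lt_div_iff_mul_lt (Or.inl hB0) (Or.inl hBt)]
          exact hjQ
        have hAAsB : sAA a s ≤ B := by
          refine le_trans ?_ hCB.le
          rw [hC]
          calc sAA a s ≤ sAA a s + K ^ q := le_self_add
            _ ≤ sAA a s + K ^ q + 1 := le_self_add
        have hDXB : sDX x s (j+1) ≤ M * ((2:ℝ≥0∞) ^ (1/p) * B ^ (1/p)) := by
          calc sDX x s (j+1) ≤ sXX x (j+1) := sDX_le_sXX _ _
            _ ≤ M * (sAA a (j+1)) ^ (1/p) := sXX_le_dDualNorm hp1 ha (j+1)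
            _ ≤ M * ((2:ℝ≥0∞) ^ (1/p) * B ^ (1/p)) := by
                refine mul_le_mul_right ?_ M
                have hAAj : sAA a (j+1) = sAA a s + B := by
                  rw [sAA, sAA, hB, sDA,
                    Finset.sum_range_add_sum_Ico _ (show s ≤ j+1 by omega)]
                rw [hAAj, ← ENNReal.mul_rpow_of_nonneg _ _ (by positivity : (0:ℝ) ≤ 1/p)]
                refine ENNReal.rpow_le_rpow ?_ (by positivity)
                calc sAA a s + B ≤ B + B := add_le_add_left hAAsB B
                  _ = 2 * B := (two_mul B).symm
        have hBsplit : B = B ^ (1/q) * B ^ (1/p) := by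
          rw [← ENNReal.rpow_add_of_nonneg _ _ (by positivity) (by positivity),
            show 1/q + 1/p = 1 by linarith, ENNReal.rpow_one]
        have hfin : b * (B ^ (1/q) * B ^ (1/p)) ≤ M * ((2:ℝ≥0∞) ^ (1/p) * B ^ (1/p)) := by
          rw [← hBsplit]
          exact le_trans hbB.le hDXB
        have hBp0 : B ^ (1/p) ≠ 0 := by
          simp only [ne_eq, ENNReal.rpow_eq_zero_iff, not_or]
          exact ⟨fun ⟨h1, _⟩ => hB0 h1, fun ⟨h1, _⟩ => hBt h1⟩
        have hBpt : B ^ (1/p) ≠ ∞ := ENNReal.rpow_ne_top_of_nonneg (by positivity) hBt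
        have hcanc : b * B ^ (1/q) ≤ (2:ℝ≥0∞) ^ (1/p) * M := by
          have h2 : b * B ^ (1/q) * B ^ (1/p) ≤ ((2:ℝ≥0∞) ^ (1/p) * M) * B ^ (1/p) := by
            calc b * B ^ (1/q) * B ^ (1/p) = b * (B ^ (1/q) * B ^ (1/p)) := by ring
              _ ≤ M * ((2:ℝ≥0∞) ^ (1/p) * B ^ (1/p)) := hfin
              _ = ((2:ℝ≥0∞) ^ (1/p) * M) * B ^ (1/p) := by ring
          exact (ENNReal.mul_le_mul_iff_left hBp0 hBpt).mp h2
        have hBq : B ^ (1/q) ≤ K := by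
          rw [hK, ENNReal.le_div_iff_mul_le (Or.inl hb0) (Or.inl hbt)]
          rw [mul_comm] at hcanc
          exact hcanc
        have hBKq : B ≤ K ^ q := by
          calc B = (B ^ (1/q)) ^ q := by
                rw [← ENNReal.rpow_mul, one_div_mul_cancel hq0.ne', ENNReal.rpow_one]
            _ ≤ K ^ q := ENNReal.rpow_le_rpow hBq hq0.le
        have : C < K ^ q := lt_of_lt_of_le hCB hBKq
        rw [hC] at this
        have hge : K ^ q ≤ sAA a s + K ^ q + 1 := by
          calc K ^ q ≤ sAA a s + K ^ q := le_add_self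
            _ ≤ sAA a s + K ^ q + 1 := le_self_add
        exact absurd this (not_lt.mpr hge)
      · -- W finite
        set T' := sTT a x q s + (sSig a x s) ^ q * W with hT'
        have hT'fin : T' ≠ ∞ := by
          rw [hT']
          exact ENNReal.add_ne_top.mpr ⟨hTfin s,
            ENNReal.mul_ne_top (ENNReal.rpow_ne_top_of_nonneg hq0.le (hsf s)) hWt⟩
        have hTle : ∀ m, sTT a x q m ≤ T' := by
          intro m
          rcases le_or_gt m s with h | h
          · exact le_trans (sTT_mono h) (by rw [hT']; exact le_self_add)
          · have hm1 : m = (m-1) + 1 := by omega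
            rw [hm1, hdecomp (m-1) (by omega), hT']
            refine add_le_add_right (mul_le_mul_right ?_ _) _
            rw [hW]
            exact le_iSup (fun j => sDA a s (j+1)) (m-1)
        have hT'le : T' ≤ M * T' ^ (1/p) := by
          have hstep : T' ≤ ⨆ j, (sTT a x q s + (sSig a x s) ^ (q-1) * sDX x s (j+1)) := by
            rw [hT']
            have h1 : (sSig a x s) ^ q * W = (sSig a x s) ^ (q-1) * (sSig a x s * W) := by
              rw [← mul_assoc, rpow_sub_one_mul hq1]
            rw [h1]
            have h2 : sSig a x s * W ≤ ⨆ j, sDX x s (j+1) := by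
              rw [hW, ENNReal.mul_iSup]
              refine iSup_le fun j => ?_
              exact le_trans (tail_block_bound ha hnot (j+1)) le_rfl
            calc sTT a x q s + sSig a x s ^ (q-1) * (sSig a x s * W)
                ≤ sTT a x q s + sSig a x s ^ (q-1) * ⨆ j, sDX x s (j+1) :=
                  add_le_add_right (mul_le_mul_right h2 _) _
              _ = ⨆ j, (sTT a x q s + sSig a x s ^ (q-1) * sDX x s (j+1)) := by
                  rw [ENNReal.mul_iSup, ENNReal.add_iSup]
          refine le_trans hstep (iSup_le fun j => ?_)
          by_cases hsj : s ≤ j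
          · have hPj : sPP a x q (j+1) =
                sTT a x q s + sSig a x s ^ (q-1) * sDX x s (j+1) := by
              have h1 := (sPP_invariant (a := a) (x := x) ha hq1 j).1
              rw [hstart_all j hsj, sEll, hstart_all j hsj] at h1
              exact h1
            rw [← hPj]
            calc sPP a x q (j+1) ≤ M * (sTT a x q (j+1)) ^ (1/p) :=
                  sPP_le_mul_rpow hp1 hq1 hqp ha hsf (j+1)
              _ ≤ M * T' ^ (1/p) :=
                  mul_le_mul_right (ENNReal.rpow_le_rpow (hTle (j+1)) (by positivity)) M
          · push_neg at hsj
            have hz : sDX x s (j+1) = 0 := by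
              rw [sDX, Finset.Ico_eq_empty (by omega), Finset.sum_empty]
            rw [hz, mul_zero, add_zero]
            have hPs : sPP a x q s = sTT a x q s := by
              have := (sPP_invariant (a := a) (x := x) ha hq1 n).2
              rwa [← hs] at this
            rw [← hPs]
            calc sPP a x q s ≤ M * (sTT a x q s) ^ (1/p) :=
                  sPP_le_mul_rpow hp1 hq1 hqp ha hsf s
              _ ≤ M * T' ^ (1/p) :=
                  mul_le_mul_right (ENNReal.rpow_le_rpow (hTle s) (by positivity)) M
        exact le_trans (hTle n) (le_of_le_mul_rpow hp0 hq0 hpq hT'fin hT'le)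

end mainbound

noncomputable def sZZ (a : ℕ → ℝ) (x : ℕ → ℂ) (n : ℕ) : ℝ≥0∞ :=
  ∑ k ∈ range n, (‖x k‖₊ : ℝ≥0∞) / sEll a x k

section zbound
variable {a : ℕ → ℝ} {x : ℕ → ℂ}

lemma mul_div_le_self' {l d : ℝ≥0∞} (hl : l ≠ ∞) : (l * d) / l ≤ d := by
  by_cases hl0 : l = 0
  · simp [hl0]
  · rw [mul_comm, mul_div_assoc, ENNReal.div_self hl0 hl, mul_one]

lemma sZZ_invariant (ha : ∀ n, 0 < a n) (hsf : ∀ m, sSig a x m ≠ ∞) : ∀ n,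
    sZZ a x (n+1) ≤ sAA a (sStart a x n) + sDX x (sStart a x n) (n+1) / sEll a x n ∧
    sZZ a x (sStart a x n) ≤ sAA a (sStart a x n) := by
  intro n
  induction n with
  | zero =>
    have h0 : sStart a x 0 = 0 := rfl
    rw [h0]
    constructor
    · rw [sZZ, sDX, Nat.Ico_succ_singleton]
      simp [sAA, sEll, h0]
    · rw [sZZ, sAA]
      simp
  | succ n ih =>
    have hDXs : sDX x (n+1) (n+1+1) = (‖x (n+1)‖₊ : ℝ≥0∞) := by
      rw [sDX, Nat.Ico_succ_singleton, Finset.sum_singleton]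
    have hZsucc : sZZ a x (n+2) = sZZ a x (n+1) + (‖x (n+1)‖₊ : ℝ≥0∞) / sEll a x (n+1) := by
      rw [sZZ, Finset.sum_range_succ, ← sZZ]
    rcases sStart_succ_cases (a := a) (x := x) n with ⟨he, hQ⟩ | ⟨he, _⟩
    · -- new block at n+1
      have heqX : sDX x (sStart a x n) (n+1) =
          sEll a x n * sDA a (sStart a x n) (n+1) := by
        rw [sEll]
        exact sDX_eq_of_attained ha (sStart_le n) hQ
      have hZn1 : sZZ a x (n+1) ≤ sAA a (n+1) := by
        calc sZZ a x (n+1) ≤ sAA a (sStart a x n) +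
            sDX x (sStart a x n) (n+1) / sEll a x n := ih.1
          _ ≤ sAA a (sStart a x n) + sDA a (sStart a x n) (n+1) := by
              refine add_le_add_right ?_ _
              rw [heqX]
              exact mul_div_le_self' (by rw [sEll]; exact hsf _)
          _ = sAA a (n+1) := by
              rw [sAA, sAA, sDA, Finset.sum_range_add_sum_Ico _ (show sStart a x n ≤ n+1 by
                have := sStart_le (a := a) (x := x) n; omega)]
      constructor
      · rw [hZsucc, he, hDXs]
        exact add_le_add hZn1 le_rfl
      · rw [he]
        exact hZn1
    · constructor
      · rw [hZsucc, he]
        have hEll : sEll a x (n+1) = sEll a x n := by rw [sEll, sEll, he]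
        calc sZZ a x (n+1) + (‖x (n+1)‖₊ : ℝ≥0∞) / sEll a x (n+1)
            ≤ sAA a (sStart a x n) + sDX x (sStart a x n) (n+1) / sEll a x n +
              (‖x (n+1)‖₊ : ℝ≥0∞) / sEll a x (n+1) := add_le_add_left ih.1 _
          _ = sAA a (sStart a x n) + sDX x (sStart a x n) (n+1+1) / sEll a x (n+1) := by
              rw [hEll, add_assoc, ENNReal.div_add_div_same,
                ← sDX_add (x := x) (m := sStart a x n) (k := n+1) (l := n+1+1)
                  (by have := sStart_le (a := a) (x := x) n; omega) (by omega), hDXs]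
      · rw [he]
        exact ih.2

lemma sZZ_le_sAA (ha : ∀ n, 0 < a n) (hsf : ∀ m, sSig a x m ≠ ∞) (n : ℕ) :
    sZZ a x (n+1) ≤ sAA a (n+1) := by
  calc sZZ a x (n+1) ≤ sAA a (sStart a x n) +
      sDX x (sStart a x n) (n+1) / sEll a x n := (sZZ_invariant ha hsf n).1
    _ ≤ sAA a (sStart a x n) + sDA a (sStart a x n) (n+1) := by
        refine add_le_add_right ?_ _
        have hle : sDX x (sStart a x n) (n+1) ≤ sEll a x n * sDA a (sStart a x n) (n+1) := by
          rw [sEll]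
          exact sDX_le_of_le_sSig ha (sStart_le n)
        refine le_trans (ENNReal.div_le_div_right hle _) ?_
        exact mul_div_le_self' (by rw [sEll]; exact hsf _)
    _ = sAA a (n+1) := by
        rw [sAA, sAA, sDA, Finset.sum_range_add_sum_Ico _ (show sStart a x n ≤ n+1 by
          have := sStart_le (a := a) (x := x) n; omega)]

end zbound

set_option maxHeartbeats 1000000 in
lemma part2 (p q : ℝ) (hp : 1 < p) (hq : 1 / p + 1 / q = 1)
    (a : ℕ → ℝ) (ha : ∀ n, 0 < a n) (x : ℕ → ℂ) (hM : dDualNorm a p x < ∞) :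
    ∃ y z : ℕ → ℂ, (∀ n, x n = y n * z n) ∧
      lpNorm q y * gNorm a p z ≤ dDualNorm a p x := by
  have hp0 : (0:ℝ) < p := lt_trans one_pos hp
  have hq0 : (0:ℝ) < q := by
    have h1 : (0:ℝ) < 1/q := by
      have : 1/p < 1 := by rw [div_lt_one hp0]; exact hp
      linarith
    exact (one_div_pos).mp h1
  have hq1 : 1 < q := by
    have h1 : 1/q < 1 := by
      have : (0:ℝ) < 1/p := by positivity
      linarith
    rw [div_lt_one hq0] at h1; exact h1
  have hq' : q + p = p * q := by
    have hq2 := hq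
    field_simp at hq2
    linarith
  have hqp : (q-1)*p = q := by nlinarith [hq']
  by_cases hx : ∀ n, x n = 0
  · refine ⟨fun _ => 0, fun _ => 0, fun n => by rw [hx n, mul_zero], ?_⟩
    have hy : lpNorm q (fun _ => (0:ℂ)) = 0 := by
      rw [lpNorm]
      simp only [nnnorm_zero, ENNReal.coe_zero, ENNReal.zero_rpow_of_pos hq0, tsum_zero]
      exact ENNReal.zero_rpow_of_pos (by positivity)
    rw [hy, zero_mul]
    exact zero_le
  · push_neg at hx
    obtain ⟨n0, hn0⟩ := hx
    set M := dDualNorm a p x with hMdef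
    have hMne : M ≠ ∞ := hM.ne
    have hsf : ∀ m, sSig a x m ≠ ∞ := sSig_ne_top hp ha hMne
    set yE : ℕ → ℝ≥0∞ := fun k => ((‖x k‖₊ : ℝ≥0∞) * sEll a x k ^ (q-1)) ^ (1/q) with hyE
    have hyE_fin : ∀ k, yE k ≠ ∞ := by
      intro k
      rw [hyE]
      exact ENNReal.rpow_ne_top_of_nonneg (by positivity)
        (ENNReal.mul_ne_top ENNReal.coe_ne_top
          (ENNReal.rpow_ne_top_of_nonneg (by linarith) (hsf _)))
    set y : ℕ → ℂ := fun k => ((yE k).toReal : ℂ) with hy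
    set z : ℕ → ℂ := fun k => x k / y k with hz
    have hy_norm : ∀ k, (‖y k‖₊ : ℝ≥0∞) = yE k := fun k => coe_nnnorm_toReal (hyE_fin k)
    have hy_zero : ∀ k, y k = 0 → x k = 0 := by
      intro k hk
      rw [hy] at hk
      simp only [Complex.ofReal_eq_zero] at hk
      have h1 : yE k = 0 := by
        rcases (ENNReal.toReal_eq_zero_iff _).mp hk with h | h
        · exact h
        · exact absurd h (hyE_fin k)
      rw [hyE] at h1
      simp only [ENNReal.rpow_eq_zero_iff] at h1
      rcases h1 with ⟨h1, _⟩ | ⟨_, h2⟩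
      · rcases mul_eq_zero.mp h1 with h | h
        · simpa using h
        · rcases (ENNReal.rpow_eq_zero_iff).mp h with ⟨h3, _⟩ | ⟨h3, _⟩
          · exact ell_eq_zero_imp h3
          · exact absurd h3 (hsf _)
      · exact absurd (by positivity : (0:ℝ) < 1/q) (not_lt.mpr (le_of_lt h2))
    refine ⟨y, z, ?_, ?_⟩
    · intro n
      by_cases hyn : y n = 0
      · rw [hz]
        simp only
        rw [hyn, zero_mul]
        exact hy_zero n hyn
      · rw [hz]
        simp only
        rw [mul_comm]
        exact (div_mul_cancel₀ (x n) hyn).symm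
    · -- the norm bound
      have hlp : lpNorm q y = (∑' n, (‖x n‖₊ : ℝ≥0∞) * sEll a x n ^ (q-1)) ^ (1/q) := by
        rw [lpNorm]
        congr 1
        refine tsum_congr fun n => ?_
        rw [hy_norm n, hyE]
        simp only
        rw [← ENNReal.rpow_mul, one_div_mul_cancel hq0.ne', ENNReal.rpow_one]
      have hPle : (∑' n, (‖x n‖₊ : ℝ≥0∞) * sEll a x n ^ (q-1)) ≤ M ^ q := by
        rw [ENNReal.tsum_eq_iSup_nat]
        refine iSup_le fun n => ?_
        have h1 : ∑ k ∈ Finset.range n, (‖x k‖₊ : ℝ≥0∞) * sEll a x k ^ (q-1) =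
            sPP a x q n := rfl
        rw [h1]
        exact le_trans (sPP_le_sTT ha hq1.le n) (sTT_le_Mq hp hq hq1.le hq0 hqp ha hMne n)
      have hlpM : lpNorm q y ≤ M := by
        rw [hlp]
        calc _ ≤ (M ^ q) ^ (1/q) := ENNReal.rpow_le_rpow hPle (by positivity)
          _ = M := by rw [← ENNReal.rpow_mul, mul_one_div_cancel hq0.ne', ENNReal.rpow_one]
      have hz_norm : ∀ k, (‖z k‖₊ : ℝ≥0∞) ^ p = (‖x k‖₊ : ℝ≥0∞) / sEll a x k := by
        intro k
        by_cases hxk : x k = 0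
        · rw [hz]
          simp only
          rw [hxk]
          simp [ENNReal.zero_rpow_of_pos hp0, zero_div, ENNReal.zero_div]
        · have hyn : y k ≠ 0 := fun h => hxk (hy_zero k h)
          have hEll0 : sEll a x k ≠ 0 := (ell_pos_of_ne hxk).ne'
          have hEllt : sEll a x k ≠ ∞ := by rw [sEll]; exact hsf _
          have hX0 : (‖x k‖₊ : ℝ≥0∞) ≠ 0 := by
            simp only [ne_eq, ENNReal.coe_eq_zero, nnnorm_eq_zero]
            exact hxk
          have hXt : (‖x k‖₊ : ℝ≥0∞) ≠ ∞ := ENNReal.coe_ne_top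
          have hzk : (‖z k‖₊ : ℝ≥0∞) = (‖x k‖₊ : ℝ≥0∞) / yE k := by
            rw [hz]
            simp only
            rw [nnnorm_div, ENNReal.coe_div (nnnorm_ne_zero_iff.mpr hyn), hy_norm k]
          have hYp : yE k ^ p = sEll a x k * (‖x k‖₊ : ℝ≥0∞) ^ (p/q) := by
            rw [hyE]
            simp only
            rw [← ENNReal.rpow_mul, show (1/q)*p = p/q by ring,
              ENNReal.mul_rpow_of_nonneg _ _ (by positivity : (0:ℝ) ≤ p/q),
              ← ENNReal.rpow_mul (sEll a x k),
              show (q-1)*(p/q) = 1 by field_simp; linarith [hqp],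
              ENNReal.rpow_one, mul_comm]
          have hXp : (‖x k‖₊ : ℝ≥0∞) ^ p =
              (‖x k‖₊ : ℝ≥0∞) * (‖x k‖₊ : ℝ≥0∞) ^ (p/q) := by
            have h1 : (‖x k‖₊ : ℝ≥0∞) * (‖x k‖₊ : ℝ≥0∞) ^ (p/q) =
                (‖x k‖₊ : ℝ≥0∞) ^ (1 + p/q) := by
              rw [ENNReal.rpow_add_of_nonneg _ _ zero_le_one (by positivity),
                ENNReal.rpow_one]
            rw [h1, show (1:ℝ) + p/q = p by field_simp; linarith [hq']]
          have hcq0 : (‖x k‖₊ : ℝ≥0∞) ^ (p/q) ≠ 0 := by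
            simp only [ne_eq, ENNReal.rpow_eq_zero_iff, not_or]
            exact ⟨fun ⟨h1, _⟩ => hX0 h1, fun ⟨h1, _⟩ => hXt h1⟩
          have hcqt : (‖x k‖₊ : ℝ≥0∞) ^ (p/q) ≠ ∞ :=
            ENNReal.rpow_ne_top_of_nonneg (by positivity) hXt
          rw [hzk, ENNReal.div_rpow_of_nonneg _ _ hp0.le, hYp, hXp, mul_comm (sEll a x k),
            mul_comm ((‖x k‖₊ : ℝ≥0∞)) ((‖x k‖₊ : ℝ≥0∞) ^ (p/q))]
          exact ENNReal.mul_div_mul_left _ _ hcq0 hcqt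
      have hgz : gNorm a p z ≤ 1 := by
        rw [gNorm]
        refine iSup_le fun n => ?_
        refine ENNReal.rpow_le_one ?_ (by positivity)
        have hsum : ∑ k ∈ Finset.range (n+1), (‖z k‖₊ : ℝ≥0∞) ^ p = sZZ a x (n+1) := by
          rw [sZZ]
          exact Finset.sum_congr rfl fun k _ => hz_norm k
        have hAA : (∑ j ∈ Finset.range (n+1), ENNReal.ofReal (a j)) = sAA a (n+1) := rfl
        rw [hsum, hAA]
        have hAApos : 0 < sAA a (n+1) := by
          refine lt_of_lt_of_le (sAW_pos ha 0) ?_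
          rw [sAA]
          exact Finset.single_le_sum (f := fun k => sAW a k) (fun i _ => zero_le)
            (Finset.mem_range.mpr (by omega))
        calc (sAA a (n+1))⁻¹ * sZZ a x (n+1) ≤ (sAA a (n+1))⁻¹ * sAA a (n+1) :=
              mul_le_mul_right (sZZ_le_sAA ha hsf n) _
          _ = 1 := ENNReal.inv_mul_cancel hAApos.ne' (sAA_ne_top _)
      calc lpNorm q y * gNorm a p z ≤ M * 1 := mul_le_mul' hlpM hgz
        _ = M := mul_one M

/-- `(d(p))^* = ℓ^q · g(p)`: products `y·z` with `y ∈ ℓ^q, z ∈ g(p)` act as bounded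
functionals on `d(p)` with norm at most `‖y‖_q ‖z‖_{g(p)}`; conversely, any `x`
bounded on `d(p)` factors as `x = y·z` with `‖y‖_q ‖z‖_{g(p)} ≤ ‖x‖_{(d(p))^*}`. -/
theorem stmt15 (p q : ℝ) (hp : 1 < p) (hq : 1 / p + 1 / q = 1)
    (a : ℕ → ℝ) (ha : ∀ n, 0 < a n) :
    (∀ y z u : ℕ → ℂ,
      (∑' n : ℕ, (‖y n * z n‖₊ : ℝ≥0∞) * (‖u n‖₊ : ℝ≥0∞)) ≤
        lpNorm q y * gNorm a p z * dNorm a p u) ∧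
    (∀ x : ℕ → ℂ, dDualNorm a p x < ∞ →
      ∃ y z : ℕ → ℂ, (∀ n, x n = y n * z n) ∧
        lpNorm q y * gNorm a p z ≤ dDualNorm a p x) := by
  exact ⟨fun y z u => part1 p q hp hq a ha y z u, fun x hx => part2 p q hp hq a ha x hx⟩
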